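/- Let T be a rooted tree with labeling L satisfying L(v) > L(p(v)) for every non-root v, and let n' > max_v L(v). In the convergecast schedule where each non-root vertex v is awake in rounds n' − L(v) and n' − L(p(v)), every vertex v has received the information from all vertices in its subtree by round n' − L(v); in particular the root receives the information of the whole tree. -/
import Mathlib


section
variable {V : Type*}

/-- The convergecast schedule of a DLT with time horizon `n'`: each non-root
vertex `v` is awake exactly in rounds `n' - L v` and `n' - L (p v)`, and the
root `r` is awake exactly in round `n' - L r`. -/
def cAwake [DecidableEq V] (r : V) (p : V → V) (L : V → ℕ) (n' : ℕ) (v : V) (t : ℕ) : Prop :=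
  if v = r then t = n' - L r else (t = n' - L v ∨ t = n' - L (p v))

/-- Convergecast in a DLT.  `T` is a finite rooted tree with root `r`, parent
function `p`, labeling `L` with `L (p v) < L v` for every non-root `v`, and
`n' > L v` for all `v`.  `knows v t u` means `v` holds the information of `u`
by the end of round `t`: every vertex always holds its own information,
knowledge is preserved over time, and in a round in which a non-root vertex
and its parent are both awake (per the schedule `cAwake`) the child transmits
all information it holds to the parent.  Then every vertex `v` has received
the information of all vertices `u` in its subtree (those with `p^[m] u = v`)
by round `n' - L v`; in particular the root receives the information of the
whole tree. -/
theorem stmt_9 [Fintype V] [DecidableEq V] (r : V) (p : V → V) (hr : p r = r)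
    (L : V → ℕ) (n' : ℕ) (hn' : ∀ v, L v < n')
    (hL : ∀ v, v ≠ r → L (p v) < L v)
    (knows : V → ℕ → V → Prop)
    (hself : ∀ v t, knows v t v)
    (hmono : ∀ v t t' u, knows v t u → t ≤ t' → knows v t' u)
    (hfwd : ∀ c, c ≠ r → ∀ t u, knows c t u →
      cAwake r p L n' c t → cAwake r p L n' (p c) t → knows (p c) t u) :
    ∀ v u m, p^[m] u = v → knows v (n' - L v) u := by
  intro v u m
  induction m generalizing v with
  | zero => rintro rfl; exact hself _ _
  | succ m ih =>
    intro h
    rw [Function.iterate_succ_apply'] at h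
    set c := p^[m] u with hc
    have hk : knows c (n' - L c) u := ih c rfl
    by_cases hcr : c = r
    · subst hcr
      rw [hr] at h
      subst h
      exact hk
    · subst h
      have hlt := hL c hcr
      have hle : n' - L c ≤ n' - L (p c) := Nat.sub_le_sub_left hlt.le n'
      have hk' : knows c (n' - L (p c)) u := hmono _ _ _ _ hk hle
      have hca : cAwake r p L n' c (n' - L (p c)) := by
        simp [cAwake, hcr]
      have hpa : cAwake r p L n' (p c) (n' - L (p c)) := by
        by_cases hpr : p c = r
        · simp [cAwake, hpr]
        · simp [cAwake, hpr]
      exact hfwd c hcr _ u hk' hca hpa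

end
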